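/- arXiv:1201.5992 — 2 statements merged into one kernel-verified Lean document; each statement's English description precedes it below -/
import Mathlib

section
/- Let U ⊆ F_q³ be a set of q² − 2 points that does not determine the points of C, with ∑_{u∈U} u = (0,0,0), and suppose the line at infinity l(y,z,w) meets C for the nonzero triple (y,z,w). Then σ_{2l}(y,z,w) = σ₂(y,z,w)^l for all integers l with 0 ≤ l ≤ (q² − q − 2)/2. -/
/-- The dot product on `F³`. -/
def dot3 {F : Type*} [Field F] (u v : F × F × F) : F :=
  u.1 * v.1 + u.2.1 * v.2.1 + u.2.2 * v.2.2

/-- The nondegenerate quadratic form `Q(t₀,t₁,t₂) = t₁² − t₀t₂` defining the conic `C`. -/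
def quadQ {F : Type*} [Field F] (t : F × F × F) : F :=
  t.2.1 ^ 2 - t.1 * t.2.2

/-- `U` does not determine the points of the conic `C`:
`Q(u − u') ≠ 0` for all distinct `u, u' ∈ U`. -/
def NoDetermine {F : Type*} [Field F] (U : Finset (F × F × F)) : Prop :=
  ∀ u ∈ U, ∀ u' ∈ U, u ≠ u' → quadQ (u - u') ≠ 0

/-- The line at infinity `l(y,z,w)` meets the conic `C`. -/
def MeetsConic {F : Type*} [Field F] (v : F × F × F) : Prop :=
  ∃ t : F × F × F, t ≠ 0 ∧ quadQ t = 0 ∧ dot3 v t = 0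

/-- `σ_i(y,z,w)`: the `i`-th elementary symmetric function of the multiset
`{u·(y,z,w) : u ∈ U}`. -/
def sigmaU {F : Type*} [Field F] (U : Finset (F × F × F)) (v : F × F × F) (i : ℕ) : F :=
  (U.val.map (fun u => dot3 u v)).esymm i

open Finset Polynomial
lemma plane_card {F : Type*} [Field F] [Fintype F] [DecidableEq F]
    (v : F × F × F) (hv : v ≠ 0) (c : F) :
    ((Finset.univ : Finset (F × F × F)).filter (fun x => dot3 x v = c)).card
      = Fintype.card F ^ 2 := by
  have hcard2 : (Finset.univ : Finset (F × F)).card = Fintype.card F ^ 2 := by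
    simp [Finset.card_univ, Fintype.card_prod, sq]
  have hv' : v.1 ≠ 0 ∨ v.2.1 ≠ 0 ∨ v.2.2 ≠ 0 := by
    by_contra hc
    push_neg at hc
    exact hv (by ext <;> simp [hc.1, hc.2.1, hc.2.2])
  rw [← hcard2]
  rcases hv' with h1 | h1 | h1
  · apply Finset.card_nbij' (fun x : F × F × F => ((x.2.1, x.2.2) : F × F))
      (fun y : F × F => (((c - y.1 * v.2.1 - y.2 * v.2.2) * v.1⁻¹, y.1, y.2) : F × F × F))
    · intro a ha; simp
    · intro y _
      rw [Finset.mem_coe, Finset.mem_filter]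
      simp only [Finset.mem_filter, Finset.mem_univ, true_and, dot3]
      field_simp
      ring
    · intro a ha
      rw [Finset.mem_coe, Finset.mem_filter] at ha
      simp only [Finset.mem_filter, Finset.mem_univ, true_and, dot3] at ha
      have h2 : (c - a.2.1 * v.2.1 - a.2.2 * v.2.2) * v.1⁻¹ = a.1 := by
        field_simp
        linear_combination -ha
      show ((c - a.2.1 * v.2.1 - a.2.2 * v.2.2) * v.1⁻¹, a.2.1, a.2.2) = a
      rw [h2]
    · intro y _; rfl
  · apply Finset.card_nbij' (fun x : F × F × F => ((x.1, x.2.2) : F × F))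
      (fun y : F × F => ((y.1, (c - y.1 * v.1 - y.2 * v.2.2) * v.2.1⁻¹, y.2) : F × F × F))
    · intro a ha; simp
    · intro y _
      rw [Finset.mem_coe, Finset.mem_filter]
      simp only [Finset.mem_filter, Finset.mem_univ, true_and, dot3]
      field_simp
      ring
    · intro a ha
      rw [Finset.mem_coe, Finset.mem_filter] at ha
      simp only [Finset.mem_filter, Finset.mem_univ, true_and, dot3] at ha
      have h2 : (c - a.1 * v.1 - a.2.2 * v.2.2) * v.2.1⁻¹ = a.2.1 := by
        field_simp
        linear_combination -ha
      show (a.1, (c - a.1 * v.1 - a.2.2 * v.2.2) * v.2.1⁻¹, a.2.2) = a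
      rw [h2]
    · intro y _; rfl
  · apply Finset.card_nbij' (fun x : F × F × F => ((x.1, x.2.1) : F × F))
      (fun y : F × F => ((y.1, y.2, (c - y.1 * v.1 - y.2 * v.2.1) * v.2.2⁻¹) : F × F × F))
    · intro a ha; simp
    · intro y _
      rw [Finset.mem_coe, Finset.mem_filter]
      simp only [Finset.mem_filter, Finset.mem_univ, true_and, dot3]
      field_simp
      ring
    · intro a ha
      rw [Finset.mem_coe, Finset.mem_filter] at ha
      simp only [Finset.mem_filter, Finset.mem_univ, true_and, dot3] at ha
      have h2 : (c - a.1 * v.1 - a.2.1 * v.2.1) * v.2.2⁻¹ = a.2.2 := by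
        field_simp
        linear_combination -ha
      show (a.1, a.2.1, (c - a.1 * v.1 - a.2.1 * v.2.1) * v.2.2⁻¹) = a
      rw [h2]
    · intro y _; rfl
lemma quadQ_smul {F : Type*} [Field F] (μ : F) (t : F × F × F) :
    quadQ (μ • t) = μ ^ 2 * quadQ t := by
  simp only [quadQ, Prod.smul_fst, Prod.smul_snd, smul_eq_mul]
  ring

lemma fiber_card_le {F : Type*} [Field F] [Fintype F] [DecidableEq F]
    (U : Finset (F × F × F)) (hU : NoDetermine U)
    (v t : F × F × F) (ht0 : t ≠ 0) (htQ : quadQ t = 0)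
    (hvt : dot3 v t = 0)
    (hplane : ∀ c : F, ((Finset.univ : Finset (F × F × F)).filter
        (fun x => dot3 x v = c)).card = Fintype.card F ^ 2) (c : F) :
    (U.filter (fun u => dot3 u v = c)).card ≤ Fintype.card F := by
  have hq0 : 0 < Fintype.card F := Fintype.card_pos
  set S := U.filter (fun u => dot3 u v = c) with hS
  have hmaps : ∀ p ∈ S ×ˢ (Finset.univ : Finset F),
      p.1 + p.2 • t ∈ (Finset.univ : Finset (F × F × F)).filter (fun x => dot3 x v = c) := by
    rintro ⟨u, μ⟩ hp
    simp only [Finset.mem_product, hS, Finset.mem_filter] at hp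
    have hu : u.1 * v.1 + u.2.1 * v.2.1 + u.2.2 * v.2.2 = c := hp.1.2
    have hvt' : v.1 * t.1 + v.2.1 * t.2.1 + v.2.2 * t.2.2 = 0 := hvt
    rw [Finset.mem_filter]
    simp only [Finset.mem_filter, Finset.mem_univ, true_and, dot3, Prod.fst_add, Prod.snd_add,
      Prod.smul_fst, Prod.smul_snd, smul_eq_mul]
    linear_combination hu + μ * hvt'
  have hinj : Set.InjOn (fun p : (F × F × F) × F => p.1 + p.2 • t)
      ((S ×ˢ (Finset.univ : Finset F)) : Finset ((F × F × F) × F)) := by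
    rintro ⟨u, μ⟩ hp ⟨u', μ'⟩ hp' heq
    simp only [Finset.coe_product, Set.mem_prod, Finset.mem_coe, hS, Finset.mem_filter] at hp hp'
    simp only at heq
    have h1 := congrArg (fun x : F × F × F => x.1) heq
    have h2 := congrArg (fun x : F × F × F => x.2.1) heq
    have h3 := congrArg (fun x : F × F × F => x.2.2) heq
    simp only [Prod.fst_add, Prod.snd_add, Prod.smul_fst, Prod.smul_snd, smul_eq_mul] at h1 h2 h3
    have hd : u - u' = (μ' - μ) • t := by
      ext <;> simp only [Prod.fst_sub, Prod.snd_sub, Prod.smul_fst, Prod.smul_snd, smul_eq_mul]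
      · linear_combination h1
      · linear_combination h2
      · linear_combination h3
    have huu' : u = u' := by
      by_contra hne
      apply hU u hp.1.1 u' hp'.1.1 hne
      rw [hd, quadQ_smul, htQ, mul_zero]
    have hμ : μ = μ' := by
      rw [huu'] at heq
      have h0 : (μ - μ') • t = 0 := by
        rw [sub_smul, sub_eq_zero]
        exact add_left_cancel heq
      rcases smul_eq_zero.mp h0 with hc | hc
      · have := sub_eq_zero.mp hc
        exact this
      · exact absurd hc ht0
    rw [huu', hμ]
  have hcard := Finset.card_le_card_of_injOn _ hmaps hinj
  rw [Finset.card_product, Finset.card_univ, hplane c, sq] at hcard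
  exact Nat.le_of_mul_le_mul_right hcard hq0

-- esymm basics
lemma esymm_zero' {R : Type*} [CommSemiring R] (s : Multiset R) : s.esymm 0 = 1 := by
  simp [Multiset.esymm]

lemma esymm_one' {R : Type*} [CommSemiring R] (s : Multiset R) : s.esymm 1 = s.sum := by
  simp [Multiset.esymm, Multiset.powersetCard_one]

-- ∏ over all field elements
lemma prod_X_add_C_univ (F : Type*) [Field F] [Fintype F] [DecidableEq F] :
    (((Finset.univ : Finset F).val.map fun r => (X + C r : F[X])).prod)
      = X ^ Fintype.card F - X := by
  have h1 : (((Finset.univ : Finset F).val.map fun r => (X + C r : F[X])).prod)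
      = ∏ c : F, (X + C c) := (Finset.prod_eq_multiset_prod _ _).symm
  have h2 : (∏ c : F, (X + C c : F[X])) = ∏ c : F, (X - C c) := by
    rw [← Equiv.prod_comp (Equiv.neg F) (fun c => (X - C c : F[X]))]
    simp [sub_neg_eq_add]
  have hdeg := FiniteField.X_pow_card_sub_X_natDegree_eq F (Fintype.one_lt_card (α := F))
  have hroots := FiniteField.roots_X_pow_card_sub_X F
  have hcr : Multiset.card (X ^ Fintype.card F - X : F[X]).roots
      = (X ^ Fintype.card F - X : F[X]).natDegree := by
    rw [hroots, hdeg]; simp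
  have h3 := Polynomial.C_leadingCoeff_mul_prod_multiset_X_sub_C hcr
  have hlc : (X ^ Fintype.card F - X : F[X]).leadingCoeff = 1 := by
    rw [Polynomial.leadingCoeff, hdeg, coeff_sub, coeff_X_pow, coeff_X]
    have : Fintype.card F ≠ 1 := Nat.ne_of_gt (Fintype.one_lt_card)
    simp [this]
    exact fun hh => this hh.symm
  rw [hlc, map_one, one_mul, hroots] at h3
  rw [h1, h2, ← h3, Finset.prod_eq_multiset_prod]

theorem stmt_4 {p h : ℕ} (hp : p.Prime) (hodd : Odd p) (hh : 1 ≤ h)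
    {F : Type*} [Field F] [Fintype F] [DecidableEq F]
    (hcard : Fintype.card F = p ^ h)
    (U : Finset (F × F × F))
    (hUcard : U.card = Fintype.card F ^ 2 - 2)
    (hU : NoDetermine U)
    (hsum : ∑ u ∈ U, u = 0)
    (v : F × F × F) (hv : v ≠ 0) (hmeet : MeetsConic v) :
    ∀ l : ℕ, l ≤ (Fintype.card F ^ 2 - Fintype.card F - 2) / 2 →
      sigmaU U v (2 * l) = sigmaU U v 2 ^ l := by
  intro l hl
  classical
  set q := Fintype.card F with hq
  -- basic numeric facts
  have hp3 : 3 ≤ p := by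
    have h2 := hp.two_le
    have hne : p ≠ 2 := by
      rintro rfl
      exact (by decide : ¬ Odd 2) hodd
    omega
  have hq3 : 3 ≤ q := by
    rw [hcard]
    calc 3 ≤ p := hp3
    _ = p ^ 1 := (pow_one p).symm
    _ ≤ p ^ h := Nat.pow_le_pow_right (by omega) hh
  have hq0 : 0 < q := by omega
  obtain ⟨Q2, hQ2⟩ : ∃ m : ℕ, q ^ 2 = m := ⟨_, rfl⟩
  have hQ2q : q * q = Q2 := by rw [← hQ2, sq]
  have h3q : 3 * q ≤ Q2 := by rw [← hQ2q]; exact Nat.mul_le_mul_right q hq3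
  rw [hQ2] at hUcard hl
  -- evenness of Q2 - q
  have hqQ2 : q ≤ Q2 := by omega
  have heven : Even (Q2 - q - 2) := by
    have h1 : Even (Q2 - q) := by
      rw [← hQ2]
      rw [Nat.even_sub (Nat.le_self_pow two_ne_zero q)]
      simp [Nat.even_pow]
    rw [Nat.even_sub (by omega : 2 ≤ Q2 - q)]
    simp [h1]
  have hble : 2 * l ≤ Q2 - q - 2 := by
    obtain ⟨m, hm⟩ := heven
    omega
  obtain ⟨t, ht0, htQ, hvt⟩ := hmeet
  -- the multiset of dot products
  set M : Multiset F := U.val.map (fun u => dot3 u v) with hM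
  have hMcard : Multiset.card M = Q2 - 2 := by
    rw [hM, Multiset.card_map, ← hUcard]; rfl
  -- fibers are small
  have hfib : ∀ c : F, (U.filter (fun u => dot3 u v = c)).card ≤ q :=
    fiber_card_le U hU v t ht0 htQ hvt (fun c => plane_card v hv c)
  -- M is below the full multiset
  set T : Multiset F := q • (Finset.univ : Finset F).val with hT
  have hle : M ≤ T := by
    rw [Multiset.le_iff_count]
    intro c
    rw [hT, Multiset.count_nsmul, Multiset.count_univ, mul_one, hM, Multiset.count_map]
    have hcc : (U.val.filter fun a => c = dot3 a v) = (U.filter fun u => dot3 u v = c).val := by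
      rw [Finset.filter_val]
      exact Multiset.filter_congr (fun x _ => by constructor <;> exact fun h' => h'.symm)
    rw [hcc]
    exact hfib c
  have hMT : M + (T - M) = T := by
    rw [add_comm]
    exact tsub_add_cancel_of_le hle
  have hTcard : Multiset.card T = q * q := by
    rw [hT, Multiset.card_nsmul]
    simp
    exact Or.inl hq.symm
  have hDcard : Multiset.card (T - M) = 2 := by
    have := congrArg Multiset.card hMT
    rw [Multiset.card_add, hMcard, hTcard] at this
    omega
  obtain ⟨a, b, hab⟩ := Multiset.card_eq_two.mp hDcard
  have hMab : M + {a, b} = T := by rw [← hab]; exact hMT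
  -- the polynomial
  set P : F[X] := (M.map fun r => X + C r).prod with hP
  -- characteristic
  haveI hring := ringChar.charP F
  obtain ⟨n, hp0, hqp⟩ := FiniteField.card F (ringChar F)
  haveI : Fact (ringChar F).Prime := ⟨hp0⟩
  haveI : CharP F[X] (ringChar F) := charP_of_injective_ringHom Polynomial.C_injective _
  have hbig : P * ((X + C a) * (X + C b)) = X ^ (q * q) - X ^ q := by
    have e1 : P * ((X + C a) * (X + C b)) = ((M + {a, b}).map fun r => X + C r).prod := by
      rw [Multiset.map_add, Multiset.prod_add]
      simp [Multiset.map_cons, Multiset.map_singleton, Multiset.prod_cons,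
        Multiset.prod_singleton]
      exact Or.inl hP
    rw [e1, hMab, hT, Multiset.map_nsmul, Multiset.prod_nsmul, prod_X_add_C_univ, ← hq]
    rw [hq, hqp, sub_pow_char_pow, ← pow_mul]
  -- degree and coefficients of P
  have hPdeg : P.natDegree = Q2 - 2 := by
    rw [hP, Polynomial.natDegree_multiset_prod_of_monic]
    · rw [Multiset.map_map]
      simp only [Function.comp, natDegree_X_add_C, Multiset.map_const', Multiset.sum_replicate,
        smul_eq_mul, mul_one]
      exact hMcard
    · intro f hf
      rw [Multiset.mem_map] at hf
      obtain ⟨r, _, rfl⟩ := hf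
      exact monic_X_add_C r
  have hPc : ∀ i, i ≤ Q2 - 2 → P.coeff (Q2 - 2 - i) = M.esymm i := by
    intro i hi
    have hk : Q2 - 2 - i ≤ Multiset.card M := by rw [hMcard]; omega
    rw [hP, Multiset.prod_X_add_C_coeff M hk, hMcard]
    congr 1
    omega
  -- the key coefficient relation
  have key : ∀ k : ℕ, P.coeff k + (a + b) * P.coeff (k + 1) + (a * b) * P.coeff (k + 2)
      = (X ^ (q * q) - X ^ q : F[X]).coeff (k + 2) := by
    intro k
    have e2 : P * ((X + C a) * (X + C b))
        = P * X ^ 2 + (P * C (a + b)) * X + P * C (a * b) := by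
      rw [C_add, C_mul]; ring
    have c1 : (P * X ^ 2).coeff (k + 2) = P.coeff k := Polynomial.coeff_mul_X_pow P 2 k
    have c2 : ((P * C (a + b)) * X).coeff (k + 2) = P.coeff (k + 1) * (a + b) := by
      rw [show k + 2 = (k + 1) + 1 from rfl, Polynomial.coeff_mul_X, Polynomial.coeff_mul_C]
    have c3 : (P * C (a * b)).coeff (k + 2) = P.coeff (k + 2) * (a * b) :=
      Polynomial.coeff_mul_C _ _ _
    rw [← hbig, e2, Polynomial.coeff_add, Polynomial.coeff_add, c1, c2, c3]
    ring
  -- σ₁ = 0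
  have hMsum : M.sum = 0 := by
    have e1 : M.sum = ∑ u ∈ U, dot3 u v := (Finset.sum_eq_multiset_sum U _).symm
    have e2 : ∑ u ∈ U, dot3 u v = dot3 (∑ u ∈ U, u) v := by
      simp only [dot3, Prod.fst_sum, Prod.snd_sum, Finset.sum_add_distrib, Finset.sum_mul]
    rw [e1, e2, hsum]
    simp [dot3]
  -- a + b = 0
  have hcoeff1 : P.coeff (Q2 - 3) = 0 := by
    have := hPc 1 (by omega)
    rw [show Q2 - 2 - 1 = Q2 - 3 by omega] at this
    rw [this, esymm_one', hMsum]
  have hcoeffN : P.coeff (Q2 - 2) = 1 := by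
    have := hPc 0 (by omega)
    rw [Nat.sub_zero] at this
    rw [this, esymm_zero']
  have hcoefftop : P.coeff (Q2 - 1) = 0 :=
    Polynomial.coeff_eq_zero_of_natDegree_lt (by rw [hPdeg]; omega)
  have hab0 : a + b = 0 := by
    have hk := key (Q2 - 3)
    rw [show Q2 - 3 + 1 = Q2 - 2 by omega, show Q2 - 3 + 2 = Q2 - 1 by omega,
      hcoeff1, hcoeffN, hcoefftop] at hk
    rw [Polynomial.coeff_sub, Polynomial.coeff_X_pow, Polynomial.coeff_X_pow,
      if_neg (by omega : ¬ Q2 - 1 = q * q), if_neg (by omega : ¬ Q2 - 1 = q), sub_zero] at hk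
    linear_combination hk
  have hb : b = -a := by linear_combination hab0
  -- the recurrence
  have hrec : ∀ m : ℕ, 1 ≤ m → 2 * m ≤ Q2 - q - 2 →
      M.esymm (2 * m) = (a * a) * M.esymm (2 * m - 2) := by
    intro m hm1 hm2
    have hk := key (Q2 - 2 - 2 * m)
    rw [show Q2 - 2 - 2 * m + 2 = Q2 - 2 * m by omega] at hk
    have e1 : P.coeff (Q2 - 2 - 2 * m) = M.esymm (2 * m) := hPc (2 * m) (by omega)
    have e2 : P.coeff (Q2 - 2 * m) = M.esymm (2 * m - 2) := by
      have := hPc (2 * m - 2) (by omega)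
      rw [show Q2 - 2 - (2 * m - 2) = Q2 - 2 * m by omega] at this
      exact this
    rw [e1, e2, hab0, zero_mul, add_zero] at hk
    rw [Polynomial.coeff_sub, Polynomial.coeff_X_pow, Polynomial.coeff_X_pow,
      if_neg (by omega : ¬ Q2 - 2 * m = q * q), if_neg (by omega : ¬ Q2 - 2 * m = q),
      sub_zero] at hk
    rw [hb] at hk
    linear_combination hk
  -- the induction
  have hmain : ∀ m : ℕ, 2 * m ≤ Q2 - q - 2 → M.esymm (2 * m) = (a * a) ^ m := by
    intro m
    induction m with
    | zero => intro _; simp [esymm_zero']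
    | succ n ih =>
      intro hle2
      have h1 := hrec (n + 1) (by omega) hle2
      rw [show 2 * (n + 1) - 2 = 2 * n by omega] at h1
      rw [h1, ih (by omega)]
      ring
  have h2sig : M.esymm 2 = a * a := by
    have := hmain 1 (by omega)
    simpa using this
  show M.esymm (2 * l) = M.esymm 2 ^ l
  rw [hmain l hble, h2sig]
end

section
/- Let U ⊆ F_q³ be a set of q² − 2 points that does not determine the points of C, with ∑_{u∈U} u = (0,0,0). If there exists v = (A,B,C') ∈ F_q³ such that σ₂(Y,Z,W) = (AY + BZ + C'W)² in F_q[Y,Z,W], then the set U* = U ∪ {v, −v} has cardinality q² (in particular v ≠ 0 and v, −v ∉ U) and U* does not determine the points of C. -/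
/-- The linear form `u₀Y + u₁Z + u₂W` in `F[Y,Z,W]` associated to `u ∈ F³`. -/
noncomputable def linForm {F : Type*} [Field F] (u : F × F × F) : MvPolynomial (Fin 3) F :=
  MvPolynomial.C u.1 * MvPolynomial.X 0 + MvPolynomial.C u.2.1 * MvPolynomial.X 1 +
    MvPolynomial.C u.2.2 * MvPolynomial.X 2

/-- `σ_i(Y,Z,W)`: the `i`-th elementary symmetric polynomial of the multiset of linear
forms `{u₀Y + u₁Z + u₂W : u ∈ U}`, as a polynomial in `F[Y,Z,W]`. -/
noncomputable def sigmaPoly {F : Type*} [Field F] (U : Finset (F × F × F)) (i : ℕ) :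
    MvPolynomial (Fin 3) F :=
  (U.val.map linForm).esymm i

section Aux

lemma map_esymm' {R S : Type*} [CommSemiring R] [CommSemiring S] (f : R →+* S)
    (s : Multiset R) (n : ℕ) : f (s.esymm n) = (s.map f).esymm n := by
  simp only [Multiset.esymm, Multiset.powersetCard_map, Multiset.map_map]
  rw [map_multiset_sum, Multiset.map_map]
  congr 1
  refine Multiset.map_congr rfl fun t _ => ?_
  simp [map_multiset_prod]

lemma esymm_two' {R : Type*} [CommRing R] (s : Multiset R) :
    s.sum ^ 2 = 2 * s.esymm 2 + (s.map (· ^ 2)).sum := by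
  induction s using Multiset.induction with
  | empty => simp [Multiset.esymm, Multiset.powersetCard_eq_empty 2 (s := (0 : Multiset R)) (by simp)]
  | cons a s ih =>
    have hcons : (a ::ₘ s).esymm 2 = s.esymm 2 + a * s.sum := by
      simp only [Multiset.esymm, Multiset.powersetCard_cons, Multiset.map_add,
        Multiset.sum_add, Multiset.powersetCard_one, Multiset.map_map]
      congr 1
      simp only [Function.comp_def, Multiset.prod_cons, Multiset.prod_singleton]
      rw [show (Multiset.map (fun x => a * x) s) = s.map (fun x => a * id x) by simp,
        Multiset.sum_map_mul_left]
      simp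
    simp only [Multiset.sum_cons, Multiset.map_cons, hcons]
    ring_nf
    ring_nf at ih
    linear_combination ih

lemma eval_linForm {F : Type*} [Field F] (x : Fin 3 → F) (u : F × F × F) :
    MvPolynomial.eval x (linForm u) = dot3 u (x 0, x 1, x 2) := by
  simp [linForm, dot3]

lemma eval_sigmaPoly {F : Type*} [Field F] (U : Finset (F × F × F)) (i : ℕ) (x : Fin 3 → F) :
    MvPolynomial.eval x (sigmaPoly U i)
      = (U.val.map (fun u => dot3 u (x 0, x 1, x 2))).esymm i := by
  rw [sigmaPoly, map_esymm' (MvPolynomial.eval x), Multiset.map_map]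
  congr 1
  refine Multiset.map_congr rfl fun u _ => ?_
  simp [eval_linForm]

end Aux

section Aux2
variable {F : Type*} [Field F]

lemma dot3_sub (a b x : F × F × F) : dot3 (a - b) x = dot3 a x - dot3 b x := by
  simp [dot3]; ring

lemma dot3_neg (a x : F × F × F) : dot3 (-a) x = -dot3 a x := by
  simp [dot3]; ring

lemma dot3_smul_add (u : F × F × F) (c₁ c₂ : F) (x₁ x₂ : F × F × F) :
    dot3 u (c₁ • x₁ + c₂ • x₂) = c₁ * dot3 u x₁ + c₂ * dot3 u x₂ := by
  simp [dot3, Prod.smul_def, smul_eq_mul]; ring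

lemma sum_dot3 {ι : Type*} (U : Finset ι) (f : ι → F × F × F) (x : F × F × F) :
    ∑ u ∈ U, dot3 (f u) x = dot3 (∑ u ∈ U, f u) x := by
  simp only [dot3, Prod.fst_sum, Prod.snd_sum, Finset.sum_add_distrib, Finset.sum_mul]

lemma cone_dirs (z : F × F × F) (hz : quadQ z = 0) :
    ∃ x₁ x₂ : F × F × F, dot3 z x₁ = 0 ∧ dot3 z x₂ = 0 ∧
      ∀ w : F × F × F, dot3 w x₁ = 0 → dot3 w x₂ = 0 → quadQ w = 0 := by
  by_cases h0 : z.1 = 0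
  · have h1 : z.2.1 = 0 := by
      have : z.2.1 ^ 2 = 0 := by simpa [quadQ, h0] using hz
      exact pow_eq_zero_iff (by norm_num) |>.mp this
    refine ⟨(1, 0, 0), (0, 1, 0), by simp [dot3, h0], by simp [dot3, h1], ?_⟩
    intro w hw1 hw2
    simp only [dot3] at hw1 hw2
    simp only [quadQ]
    linear_combination (w.2.1) * hw2 - w.2.2 * hw1
  · set s := z.2.1 / z.1 with hs
    have hq : z.2.1 ^ 2 = z.1 * z.2.2 := by
      have := hz; simp only [quadQ, sub_eq_zero] at this; exact this
    have hz1 : s * z.1 = z.2.1 := by rw [hs]; field_simp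
    have hz2 : s ^ 2 * z.1 = z.2.2 := by
      rw [hs]; field_simp; linear_combination hq
    refine ⟨(-s, 1, 0), (-(s ^ 2), 0, 1), ?_, ?_, ?_⟩
    · simp only [dot3]; linear_combination -hz1
    · simp only [dot3]; linear_combination -hz2
    · intro w hw1 hw2
      simp only [dot3] at hw1 hw2
      simp only [quadQ]
      linear_combination (w.2.1 + s * w.1) * hw1 - w.1 * hw2

end Aux2

section Core
variable {F : Type*} [Field F] [Fintype F] [DecidableEq F]

lemma coreA (h2 : (2:F) ≠ 0) (hq0 : ((Fintype.card F : ℕ) : F) = 0)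
    (U : Finset (F × F × F)) (hUcard : U.card = Fintype.card F ^ 2 - 2)
    (hU : NoDetermine U)
    (v x₁ x₂ : F × F × F)
    (hker : ∀ w : F × F × F, dot3 w x₁ = 0 → dot3 w x₂ = 0 → quadQ w = 0)
    (hS1 : ∀ x : F × F × F, ∑ u ∈ U, dot3 u x = 0)
    (hS2 : ∀ x : F × F × F, ∑ u ∈ U, (dot3 u x) ^ 2 = -(2 * (dot3 v x) ^ 2)) :
    (∀ u ∈ U, (dot3 v x₁, dot3 v x₂) ≠ (dot3 u x₁, dot3 u x₂)) ∧
    (∀ u ∈ U, (-(dot3 v x₁), -(dot3 v x₂)) ≠ (dot3 u x₁, dot3 u x₂)) ∧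
    ¬(dot3 v x₁ = 0 ∧ dot3 v x₂ = 0) := by
  classical
  set ψ : F × F × F → F × F := fun u => (dot3 u x₁, dot3 u x₂) with hψ
  have hinj : ∀ a ∈ U, ∀ b ∈ U, ψ a = ψ b → a = b := by
    intro a ha b hb hab
    by_contra hne
    simp only [hψ, Prod.mk.injEq] at hab
    refine hU a ha b hb hne (hker _ ?_ ?_)
    · rw [dot3_sub, hab.1]; ring
    · rw [dot3_sub, hab.2]; ring
  set W : Finset (F × F) := U.image ψ with hW
  have hWcard : W.card = Fintype.card F ^ 2 - 2 := by
    rw [hW, Finset.card_image_of_injOn (fun a ha b hb => hinj a ha b hb), hUcard]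
  have hq2 : 2 ≤ Fintype.card F ^ 2 := by
    have : 2 ≤ Fintype.card F := Fintype.one_lt_card
    nlinarith
  have hcardFF : Fintype.card (F × F) = Fintype.card F ^ 2 := by
    rw [Fintype.card_prod]; ring
  set M : Finset (F × F) := Finset.univ \ W with hM
  have hMcard : M.card = 2 := by
    rw [hM, Finset.card_sdiff_of_subset (Finset.subset_univ W), Finset.card_univ, hcardFF, hWcard]
    omega
  obtain ⟨m₁, m₂, hmne, hMeq⟩ := Finset.card_eq_two.mp hMcard
  have hsplit : ∀ g : F × F → F,
      ∑ u ∈ U, g (ψ u) = (∑ P : F × F, g P) - g m₁ - g m₂ := by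
    intro g
    have h1 : ∑ u ∈ U, g (ψ u) = ∑ w ∈ W, g w :=
      (Finset.sum_image (fun a ha b hb => hinj a ha b hb)).symm
    have h2' : ∑ w ∈ M, g w + ∑ w ∈ W, g w = ∑ P : F × F, g P :=
      Finset.sum_sdiff (Finset.subset_univ W)
    have h3 : ∑ w ∈ M, g w = g m₁ + g m₂ := by rw [hMeq, Finset.sum_pair hmne]
    rw [h1]; linear_combination h2' - h3
  have hsumF : ∑ a : F, a = 0 := by
    have h := Fintype.sum_equiv (Equiv.neg F) (fun a : F => a) (fun a : F => -a)
      (fun a => (neg_neg a).symm)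
    have h2s : (2:F) * ∑ a : F, a = 0 := by
      rw [Finset.sum_neg_distrib] at h
      linear_combination h
    exact (mul_eq_zero.mp h2s).resolve_left h2
  have hsqconst : ∀ c : F, ∑ _a : F, c = ((Fintype.card F : ℕ) : F) * c := by
    intro c; simp [Finset.sum_const, Finset.card_univ, nsmul_eq_mul]
  have hT1 : ∑ P : F × F, P.1 = 0 := by
    rw [Fintype.sum_prod_type]
    simp_rw [hsqconst, hq0, zero_mul]
    simp
  have hT2 : ∑ P : F × F, P.2 = 0 := by
    rw [Fintype.sum_prod_type]
    simp [hsumF]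
  have hTsq : ∀ c₁ c₂ : F, ∑ P : F × F, (c₁ * P.1 + c₂ * P.2) ^ 2 = 0 := by
    intro c₁ c₂
    rw [Fintype.sum_prod_type]
    have inner : ∀ a : F, ∑ b : F, (c₁ * a + c₂ * b) ^ 2
        = ((Fintype.card F : ℕ) : F) * (c₁ * a) ^ 2 + 2 * c₁ * c₂ * a * (∑ b : F, b)
          + c₂ ^ 2 * (∑ b : F, b ^ 2) := by
      intro a
      rw [Finset.mul_sum, Finset.mul_sum, ← hsqconst ((c₁ * a) ^ 2),
        ← Finset.sum_add_distrib, ← Finset.sum_add_distrib]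
      exact Finset.sum_congr rfl fun b _ => by ring
    simp_rw [inner, hsumF, mul_zero, add_zero, hq0, zero_mul, zero_add]
    rw [hsqconst, hq0, zero_mul]
  have hm12 : m₂ = -m₁ := by
    have e1 := hsplit Prod.fst
    have e2 := hsplit Prod.snd
    rw [hT1] at e1; rw [hT2] at e2
    have l1 : ∑ u ∈ U, (ψ u).1 = 0 := hS1 x₁
    have l2 : ∑ u ∈ U, (ψ u).2 = 0 := hS1 x₂
    rw [l1] at e1; rw [l2] at e2
    have hfst : m₂.1 = -m₁.1 := by linear_combination e1
    have hsnd : m₂.2 = -m₁.2 := by linear_combination e2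
    exact Prod.ext (by rw [Prod.fst_neg]; exact hfst) (by rw [Prod.snd_neg]; exact hsnd)
  have hsq2 : ∀ c₁ c₂ : F, (c₁ * dot3 v x₁ + c₂ * dot3 v x₂) ^ 2
      = (c₁ * m₁.1 + c₂ * m₁.2) ^ 2 := by
    intro c₁ c₂
    have e := hsplit (fun P => (c₁ * P.1 + c₂ * P.2) ^ 2)
    rw [hTsq c₁ c₂] at e
    have l : ∑ u ∈ U, (c₁ * (ψ u).1 + c₂ * (ψ u).2) ^ 2
        = -(2 * (c₁ * dot3 v x₁ + c₂ * dot3 v x₂) ^ 2) := by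
      have hx := hS2 (c₁ • x₁ + c₂ • x₂)
      simp_rw [dot3_smul_add] at hx
      exact hx
    rw [l, hm12] at e
    have key : 2 * (c₁ * dot3 v x₁ + c₂ * dot3 v x₂) ^ 2
        = 2 * (c₁ * m₁.1 + c₂ * m₁.2) ^ 2 := by
      simp only [Prod.fst_neg, Prod.snd_neg] at e
      linear_combination -e
    exact mul_left_cancel₀ h2 key
  set A := dot3 v x₁ with hA
  set B := dot3 v x₂ with hB
  have hdiff : ∀ c₁ c₂ : F,
      (c₁ * (A - m₁.1) + c₂ * (B - m₁.2)) * (c₁ * (A + m₁.1) + c₂ * (B + m₁.2)) = 0 := by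
    intro c₁ c₂; linear_combination hsq2 c₁ c₂
  have exc : ∀ w1 w2 : F, ¬(w1 = 0 ∧ w2 = 0) → ∃ c₁ c₂ : F, c₁ * w1 + c₂ * w2 ≠ 0 := by
    intro w1 w2 hw
    by_cases hw1 : w1 = 0
    · refine ⟨0, 1, ?_⟩
      have hw2 : w2 ≠ 0 := fun h => hw ⟨hw1, h⟩
      simpa using hw2
    · exact ⟨1, 0, by simpa using hw1⟩
  have hzz : (A = m₁.1 ∧ B = m₁.2) ∨ (A = -m₁.1 ∧ B = -m₁.2) := by
    by_contra hcon
    push_neg at hcon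
    have hz : ¬(A - m₁.1 = 0 ∧ B - m₁.2 = 0) := by
      rintro ⟨u1, u2⟩
      exact absurd (hcon.1 (by linear_combination u1)) (fun hh => hh (by linear_combination u2))
    have hz' : ¬(A + m₁.1 = 0 ∧ B + m₁.2 = 0) := by
      rintro ⟨u1, u2⟩
      exact absurd (hcon.2 (by linear_combination u1)) (fun hh => hh (by linear_combination u2))
    obtain ⟨a1, a2, haz⟩ := exc _ _ hz
    obtain ⟨b1, b2, hbz⟩ := exc _ _ hz'
    by_cases hc1 : a1 * (A + m₁.1) + a2 * (B + m₁.2) = 0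
    · by_cases hc2 : b1 * (A - m₁.1) + b2 * (B - m₁.2) = 0
      · have hd := hdiff (a1 + b1) (a2 + b2)
        have f1 : (a1 + b1) * (A - m₁.1) + (a2 + b2) * (B - m₁.2) ≠ 0 := by
          intro hcontra
          exact haz (by linear_combination hcontra - hc2)
        have f2 : (a1 + b1) * (A + m₁.1) + (a2 + b2) * (B + m₁.2) ≠ 0 := by
          intro hcontra
          exact hbz (by linear_combination hcontra - hc1)
        exact mul_ne_zero f1 f2 hd
      · exact mul_ne_zero hc2 hbz (hdiff b1 b2)
    · exact mul_ne_zero haz hc1 (hdiff a1 a2)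
  have hm1M : m₁ ∈ M := by rw [hMeq]; simp
  have hm2M : m₂ ∈ M := by rw [hMeq]; simp
  have hnW : ∀ m ∈ M, ∀ u ∈ U, m ≠ ψ u := by
    intro m hm u hu heq
    rw [hM, Finset.mem_sdiff] at hm
    exact hm.2 (heq ▸ Finset.mem_image_of_mem ψ hu)
  have hpsiv : (A, B) = m₁ ∨ (A, B) = m₂ := by
    rcases hzz with ⟨h1', h2'⟩ | ⟨h1', h2'⟩
    · exact Or.inl (Prod.ext h1' h2')
    · exact Or.inr (by rw [hm12]; exact Prod.ext (by simpa using h1') (by simpa using h2'))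
  have hpsinv : (-A, -B) = m₁ ∨ (-A, -B) = m₂ := by
    rcases hpsiv with hv | hv
    · right
      rw [hm12, ← hv]
      exact Prod.ext (by simp) (by simp)
    · left
      have : m₁ = -m₂ := by rw [hm12]; simp
      rw [this, ← hv]
      exact Prod.ext (by simp) (by simp)
  refine ⟨?_, ?_, ?_⟩
  · intro u hu
    rcases hpsiv with hv | hv
    · rw [hv]; exact hnW m₁ hm1M u hu
    · rw [hv]; exact hnW m₂ hm2M u hu
  · intro u hu
    rcases hpsinv with hv | hv
    · rw [hv]; exact hnW m₁ hm1M u hu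
    · rw [hv]; exact hnW m₂ hm2M u hu
  · rintro ⟨hA0, hB0⟩
    have h00 : ((0 : F), (0 : F)) = m₁ ∨ ((0 : F), (0 : F)) = m₂ := by
      rcases hpsiv with hv | hv
      · left; rw [← hv, hA0, hB0]
      · right; rw [← hv, hA0, hB0]
    rcases h00 with h0 | h0
    · exact hmne (by rw [hm12, ← h0]; simp)
    · have hm1 : m₁ = -m₂ := by rw [hm12]; simp
      exact hmne (by rw [hm1, ← h0]; simp)
  
end Core

theorem stmt_10 {p h : ℕ} (hp : p.Prime) (hodd : Odd p) (hh : 1 ≤ h)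
    {F : Type*} [Field F] [Fintype F] [DecidableEq F]
    (hcard : Fintype.card F = p ^ h)
    (U : Finset (F × F × F))
    (hUcard : U.card = Fintype.card F ^ 2 - 2)
    (hU : NoDetermine U)
    (hsum : ∑ u ∈ U, u = 0)
    (v : F × F × F)
    (hsq : sigmaPoly U 2 = linForm v ^ 2) :
    (insert v (insert (-v) U)).card = Fintype.card F ^ 2 ∧
      NoDetermine (insert v (insert (-v) U)) := by
  classical
  have hq0 : ((Fintype.card F : ℕ) : F) = 0 := FiniteField.cast_card_eq_zero F
  have hp0 : (p : F) = 0 := by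
    have h1 : ((p ^ h : ℕ) : F) = 0 := by rw [← hcard]; exact hq0
    push_cast at h1
    exact pow_eq_zero_iff (Nat.one_le_iff_ne_zero.mp hh) |>.mp h1
  have h2 : (2 : F) ≠ 0 := by
    intro h20
    obtain ⟨k, hk⟩ := hodd
    have hone : (p : F) = 1 := by rw [hk]; push_cast; rw [h20]; ring
    rw [hp0] at hone
    exact zero_ne_one hone
  have hS1 : ∀ x : F × F × F, ∑ u ∈ U, dot3 u x = 0 := by
    intro x
    rw [sum_dot3, hsum]
    simp [dot3]
  have heval : ∀ x : F × F × F,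
      (U.val.map (fun u => dot3 u x)).esymm 2 = dot3 v x ^ 2 := by
    intro x
    have e := congrArg (MvPolynomial.eval (![x.1, x.2.1, x.2.2] : Fin 3 → F)) hsq
    rw [eval_sigmaPoly, map_pow, eval_linForm] at e
    simpa using e
  have hS2 : ∀ x : F × F × F, ∑ u ∈ U, dot3 u x ^ 2 = -(2 * dot3 v x ^ 2) := by
    intro x
    have hes := esymm_two' (U.val.map (fun u => dot3 u x))
    rw [heval x] at hes
    have hs : (U.val.map (fun u => dot3 u x)).sum = 0 := by
      rw [← Finset.sum_eq_multiset_sum]; exact hS1 x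
    rw [hs, Multiset.map_map] at hes
    have hms : ∑ u ∈ U, dot3 u x ^ 2
        = ((U.val.map ((· ^ 2) ∘ fun u => dot3 u x))).sum := by
      rw [Finset.sum_eq_multiset_sum]
      congr 1
    rw [hms]
    linear_combination -hes
  obtain ⟨C1, C2, C3⟩ := coreA h2 hq0 U hUcard hU v (1, 0, 0) (0, 1, 0)
    (fun w hw1 hw2 => by
      simp only [dot3] at hw1 hw2
      simp only [quadQ]
      linear_combination w.2.1 * hw2 - w.2.2 * hw1) hS1 hS2
  have hvne : v ≠ -v := by
    intro hv
    apply C3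
    constructor
    · have e : dot3 v (1, 0, 0) = dot3 (-v) (1, 0, 0) := by rw [← hv]
      rw [dot3_neg] at e
      exact (mul_eq_zero.mp (by linear_combination e : (2 : F) * dot3 v (1, 0, 0) = 0)).resolve_left h2
    · have e : dot3 v (0, 1, 0) = dot3 (-v) (0, 1, 0) := by rw [← hv]
      rw [dot3_neg] at e
      exact (mul_eq_zero.mp (by linear_combination e : (2 : F) * dot3 v (0, 1, 0) = 0)).resolve_left h2
  have hvU : v ∉ U := fun hv => C1 v hv rfl
  have hnvU : -v ∉ U := fun hv => C2 (-v) hv (by rw [dot3_neg, dot3_neg])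
  have hcard2 : 2 ≤ Fintype.card F ^ 2 := by
    have := Fintype.one_lt_card (α := F)
    nlinarith
  refine ⟨?_, ?_⟩
  · rw [Finset.card_insert_of_notMem (by simp [hvne, hvU]),
      Finset.card_insert_of_notMem hnvU, hUcard]
    omega
  · intro a ha b hb hab hQ
    obtain ⟨x₁, x₂, hzx1, hzx2, hker⟩ := cone_dirs (a - b) hQ
    obtain ⟨D1, D2, D3⟩ := coreA h2 hq0 U hUcard hU v x₁ x₂ hker hS1 hS2
    have e1 : dot3 a x₁ = dot3 b x₁ := by rw [dot3_sub] at hzx1; linear_combination hzx1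
    have e2 : dot3 a x₂ = dot3 b x₂ := by rw [dot3_sub] at hzx2; linear_combination hzx2
    simp only [Finset.mem_insert] at ha hb
    rcases ha with rfl | rfl | ha <;> rcases hb with rfl | rfl | hb
    · exact hab rfl
    · rw [dot3_neg] at e1 e2
      exact D3 ⟨(mul_eq_zero.mp (by linear_combination e1 : (2 : F) * dot3 a x₁ = 0)).resolve_left h2,
        (mul_eq_zero.mp (by linear_combination e2 : (2 : F) * dot3 a x₂ = 0)).resolve_left h2⟩
    · exact D1 b hb (by rw [e1, e2])
    · rw [dot3_neg] at e1 e2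
      exact D3 ⟨(mul_eq_zero.mp (by linear_combination -e1 : (2 : F) * dot3 b x₁ = 0)).resolve_left h2,
        (mul_eq_zero.mp (by linear_combination -e2 : (2 : F) * dot3 b x₂ = 0)).resolve_left h2⟩
    · exact hab rfl
    · exact D2 b hb (by rw [← e1, ← e2, dot3_neg, dot3_neg])
    · exact D1 a ha (by rw [← e1, ← e2])
    · exact D2 a ha (by rw [e1, e2, dot3_neg, dot3_neg])
    · exact hU a ha b hb hab hQ
end
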